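/- arXiv:2004.11661 — 4 statements merged into one kernel-verified Lean document; each statement's English description precedes it below -/
import Mathlib

section
/- Let ρ > 0, n ∈ ℕ, and let g_n(t) = P_n(t₁)·e^{ρ(t−t₁)} − P_{n−1}(t) where P_m(t) = ∑_{k=0}^{m} (ρt)^k / k! and 0 < t₁. Then g_n(t) ≥ 0 for all t ≥ t₁. -/
open Finset

private lemma sum_hasDerivAt (ρ : ℝ) (m : ℕ) (t : ℝ) :
    HasDerivAt (fun s => ∑ k ∈ Finset.range (m + 1), (ρ * s) ^ k / (Nat.factorial k))
      (ρ * ∑ k ∈ Finset.range m, (ρ * t) ^ k / (Nat.factorial k)) t := by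
  have key : ∀ k : ℕ, HasDerivAt (fun s => (ρ * s) ^ k / (Nat.factorial k))
      ((k * (ρ * t) ^ (k - 1) * ρ) / (Nat.factorial k)) t := by
    intro k
    have h1 : HasDerivAt (fun s : ℝ => ρ * s) ρ t := by
      simpa using (hasDerivAt_id t).const_mul ρ
    exact (h1.pow k).div_const _
  have hsum := HasDerivAt.sum (fun k (_ : k ∈ Finset.range (m + 1)) => key k)
  convert hsum using 1
  case e'_4 => rfl
  case e'_5 => rfl
  case e'_8 => ext s; simp only [Finset.sum_apply]
  rw [Finset.sum_range_succ']
  simp only [Nat.cast_zero, zero_mul, Nat.factorial_zero, Nat.cast_one, zero_div, add_zero]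
  rw [Finset.mul_sum]
  apply Finset.sum_congr rfl
  intro k _
  have hfac : ((Nat.factorial (k + 1) : ℝ)) = (k + 1) * Nat.factorial k := by
    push_cast [Nat.factorial_succ]; ring
  have h1 : (Nat.factorial k : ℝ) ≠ 0 := Nat.cast_ne_zero.mpr (Nat.factorial_ne_zero k)
  have h2 : ((k : ℝ) + 1) ≠ 0 := by positivity
  simp only [Nat.add_sub_cancel, hfac]
  push_cast
  field_simp

theorem flow_minus_taylor_nonneg (ρ : ℝ) (hρ : 0 < ρ) (n : ℕ) (t₁ : ℝ) (ht₁ : 0 < t₁)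
    (t : ℝ) (ht : t₁ ≤ t) :
    0 ≤ (∑ k ∈ Finset.range (n + 1), (ρ * t₁) ^ k / (Nat.factorial k)) *
          Real.exp (ρ * (t - t₁)) -
        ∑ k ∈ Finset.range ((n - 1) + 1), (ρ * t) ^ k / (Nat.factorial k) := by
  set m := n - 1 with hm
  -- F s = exp (ρ*(t₁ - s)) * P_m s is antitone on [t₁, ∞)
  set F : ℝ → ℝ := fun s => Real.exp (ρ * (t₁ - s)) *
      ∑ k ∈ Finset.range (m + 1), (ρ * s) ^ k / (Nat.factorial k) with hF
  have hderiv : ∀ s : ℝ, HasDerivAt F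
      (-(ρ * Real.exp (ρ * (t₁ - s)) * ((ρ * s) ^ m / (Nat.factorial m)))) s := by
    intro s
    have hexp : HasDerivAt (fun s : ℝ => Real.exp (ρ * (t₁ - s))) (-ρ * Real.exp (ρ * (t₁ - s))) s := by
      have hlin : HasDerivAt (fun s : ℝ => ρ * (t₁ - s)) (-ρ) s := by
        simpa using ((hasDerivAt_id s).const_sub t₁).const_mul ρ
      simpa [mul_comm] using hlin.exp
    have hs := sum_hasDerivAt ρ m s
    have := hexp.mul hs
    convert this using 1
    case e'_4 => rfl
    case e'_5 => rfl
    case e'_8 => rfl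
    have hsplit : ∑ k ∈ Finset.range (m + 1), (ρ * s) ^ k / (Nat.factorial k)
        = (∑ k ∈ Finset.range m, (ρ * s) ^ k / (Nat.factorial k)) + (ρ * s) ^ m / (Nat.factorial m) :=
      Finset.sum_range_succ _ m
    rw [hsplit]
    ring
  have hanti : AntitoneOn F (Set.Ici t₁) := by
    apply antitoneOn_of_deriv_nonpos (convex_Ici t₁)
    · exact Continuous.continuousOn (by
        have : Continuous F := by
          apply Continuous.mul
          · exact Real.continuous_exp.comp (by continuity)
          · exact continuous_finset_sum _ (fun k _ => Continuous.div_const (by continuity) _)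
        exact this)
    · intro s _; exact (hderiv s).differentiableAt.differentiableWithinAt
    · intro s hs
      rw [(hderiv s).deriv]
      have hs' : 0 < s := lt_trans ht₁ (by simpa using hs)
      have : 0 ≤ (ρ * s) ^ m / (Nat.factorial m) := by positivity
      have hexp : 0 < Real.exp (ρ * (t₁ - s)) := Real.exp_pos _
      have := mul_nonneg (mul_nonneg hρ.le hexp.le) this
      linarith
  have hFle : F t ≤ F t₁ := hanti (Set.self_mem_Ici) (Set.mem_Ici.mpr ht) ht
  have hFt₁ : F t₁ = ∑ k ∈ Finset.range (m + 1), (ρ * t₁) ^ k / (Nat.factorial k) := by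
    simp [hF]
  -- P_m t₁ ≤ P_n t₁
  have hmn : m + 1 ≤ n + 1 := by omega
  have hsub : ∑ k ∈ Finset.range (m + 1), (ρ * t₁) ^ k / (Nat.factorial k)
      ≤ ∑ k ∈ Finset.range (n + 1), (ρ * t₁) ^ k / (Nat.factorial k) := by
    apply Finset.sum_le_sum_of_subset_of_nonneg (Finset.range_subset_range.mpr hmn)
    intro k _ _
    positivity
  have hexp_pos : 0 < Real.exp (ρ * (t - t₁)) := Real.exp_pos _
  have key : ∑ k ∈ Finset.range (m + 1), (ρ * t) ^ k / (Nat.factorial k)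
      ≤ (∑ k ∈ Finset.range (m + 1), (ρ * t₁) ^ k / (Nat.factorial k)) * Real.exp (ρ * (t - t₁)) := by
    have hFle' : Real.exp (ρ * (t₁ - t)) * ∑ k ∈ Finset.range (m + 1), (ρ * t) ^ k / (Nat.factorial k)
        ≤ ∑ k ∈ Finset.range (m + 1), (ρ * t₁) ^ k / (Nat.factorial k) := by
      rw [← hFt₁]; exact hFle
    have hid : Real.exp (ρ * (t₁ - t)) * Real.exp (ρ * (t - t₁)) = 1 := by
      rw [← Real.exp_add]; ring_nf; exact Real.exp_zero
    calc ∑ k ∈ Finset.range (m + 1), (ρ * t) ^ k / (Nat.factorial k)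
        = Real.exp (ρ * (t₁ - t)) * (∑ k ∈ Finset.range (m + 1), (ρ * t) ^ k / (Nat.factorial k)) * Real.exp (ρ * (t - t₁)) := by
          rw [mul_comm (Real.exp (ρ * (t₁ - t))) _, mul_assoc, hid, mul_one]
      _ ≤ (∑ k ∈ Finset.range (m + 1), (ρ * t₁) ^ k / (Nat.factorial k)) * Real.exp (ρ * (t - t₁)) :=
          mul_le_mul_of_nonneg_right hFle' hexp_pos.le
  have := le_trans key (mul_le_mul_of_nonneg_right hsub hexp_pos.le)
  linarith
end

section
/- Let ρ > 0 and t₀ ∈ ℚ with t₀ > 0, and let P_n(t) = ∑_{k=0}^{n} (ρt)^k / k!. Then the set L_n = {(y,t) ∈ ℝ² : y ≥ P_n(t), 0 ≤ t ≤ t₀} ∪ {(y,t) : t > t₀} is invariant under the flow (y,t) ↦ (e^{ρδ}·y, t + δ) for every δ ≥ 0, and contains the orbit {(e^{ρt}, t) : t ≥ 0}. -/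
open Finset

lemma taylor_partial_mul (n : ℕ) (a b : ℝ) (ha : 0 ≤ a) (hb : 0 ≤ b) :
    ∑ m ∈ range (n+1), (a+b)^m / m.factorial ≤
    (∑ j ∈ range (n+1), a^j / j.factorial) * (∑ k ∈ range (n+1), b^k / k.factorial) := by
  have key : ∀ m : ℕ, (a+b)^m / m.factorial
      = ∑ p ∈ Finset.HasAntidiagonal.antidiagonal m, a^p.1 / p.1.factorial * (b^p.2 / p.2.factorial) := by
    intro m
    rw [Finset.Nat.sum_antidiagonal_eq_sum_range_succ
      (fun j k => a^j / j.factorial * (b^k / k.factorial)), add_pow, Finset.sum_div]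
    refine Finset.sum_congr rfl fun k hk => ?_
    rw [Finset.mem_range, Nat.lt_succ_iff] at hk
    rw [Nat.cast_choose ℝ hk]
    have h1 : (k.factorial : ℝ) ≠ 0 := Nat.cast_ne_zero.2 k.factorial_ne_zero
    have h2 : ((m-k).factorial : ℝ) ≠ 0 := Nat.cast_ne_zero.2 (m-k).factorial_ne_zero
    have h3 : (m.factorial : ℝ) ≠ 0 := Nat.cast_ne_zero.2 m.factorial_ne_zero
    field_simp
  simp_rw [key]
  rw [Finset.sum_mul_sum, ← Finset.sum_product']
  have hdisj : (↑(range (n+1)) : Set ℕ).PairwiseDisjoint Finset.HasAntidiagonal.antidiagonal := by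
    intro x _ y _ hxy
    simp only [Function.onFun, Finset.disjoint_left, Finset.HasAntidiagonal.mem_antidiagonal]
    intro p h1 h2
    omega
  rw [← Finset.sum_biUnion hdisj]
  refine Finset.sum_le_sum_of_subset_of_nonneg ?_ ?_
  · intro p hp
    simp only [Finset.mem_biUnion, Finset.mem_range, Finset.HasAntidiagonal.mem_antidiagonal] at hp
    obtain ⟨m, hm, hpm⟩ := hp
    simp only [Finset.mem_product, Finset.mem_range]
    omega
  · intro p _ _
    positivity

theorem underapprox_set_invariant (ρ : ℝ) (hρ : 0 < ρ) (t₀ : ℚ) (ht₀ : 0 < t₀) (n : ℕ)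
    (L : Set (ℝ × ℝ))
    (hL : L = {p : ℝ × ℝ |
        (∑ k ∈ Finset.range (n + 1), (ρ * p.2) ^ k / (Nat.factorial k) ≤ p.1 ∧
          0 ≤ p.2 ∧ p.2 ≤ (t₀ : ℝ))} ∪ {p : ℝ × ℝ | (t₀ : ℝ) < p.2}) :
    (∀ δ : ℝ, 0 ≤ δ → ∀ p ∈ L, (Real.exp (ρ * δ) * p.1, p.2 + δ) ∈ L) ∧
      (∀ t : ℝ, 0 ≤ t → (Real.exp (ρ * t), t) ∈ L) := by
  subst hL
  constructor
  · rintro δ hδ p (⟨hle, h0, ht⟩ | ht)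
    · by_cases h : (t₀ : ℝ) < p.2 + δ
      · exact Or.inr h
      · refine Or.inl ⟨?_, show (0:ℝ) ≤ p.2 + δ by linarith, not_lt.1 h⟩
        have ha : 0 ≤ ρ * p.2 := mul_nonneg hρ.le h0
        have hb : 0 ≤ ρ * δ := mul_nonneg hρ.le hδ
        have h1 : (0:ℝ) ≤ ∑ k ∈ range (n + 1), (ρ * p.2) ^ k / (Nat.factorial k) :=
          Finset.sum_nonneg fun k _ => by positivity
        calc ∑ k ∈ range (n + 1), (ρ * (p.2 + δ)) ^ k / (Nat.factorial k)
            = ∑ k ∈ range (n + 1), (ρ * p.2 + ρ * δ) ^ k / (Nat.factorial k) := by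
              rw [mul_add]
          _ ≤ (∑ j ∈ range (n + 1), (ρ * p.2) ^ j / (Nat.factorial j)) *
              (∑ k ∈ range (n + 1), (ρ * δ) ^ k / (Nat.factorial k)) :=
              taylor_partial_mul n _ _ ha hb
          _ ≤ p.1 * Real.exp (ρ * δ) :=
              mul_le_mul hle (Real.sum_le_exp_of_nonneg hb _)
                (Finset.sum_nonneg fun k _ => by positivity) (h1.trans hle)
          _ = Real.exp (ρ * δ) * p.1 := mul_comm _ _
    · simp only [Set.mem_setOf_eq] at ht
      exact Or.inr (show (t₀:ℝ) < p.2 + δ by linarith)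
  · intro t ht
    by_cases h : (t₀ : ℝ) < t
    · exact Or.inr h
    · exact Or.inl ⟨Real.sum_le_exp_of_nonneg (mul_nonneg hρ.le ht) _, ht, not_lt.1 h⟩
end

section
/- Fix ρ > 0, μ > 1, and t₀ > 0. There exists n₀ ∈ ℕ such that for all n ≥ n₀ and all 0 ≤ t₁ ≤ t ≤ t₀, ρμ·P_{n−1}(μt) ≥ ρ·P_n(μt₁)·e^{ρ(t−t₁)}, where P_m(s) = ∑_{k=0}^{m} (ρs)^k / k!. -/
open Finset

lemma exp_eq_tsum_real (x : ℝ) : Real.exp x = ∑' k : ℕ, x ^ k / k.factorial := by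
  rw [Real.exp_eq_exp_ℝ, NormedSpace.exp_eq_tsum_div]

lemma tail_mono_aux (n : ℕ) {x X : ℝ} (hx : 0 ≤ x) (hxX : x ≤ X) :
    Real.exp x - ∑ k ∈ Finset.range n, x ^ k / k.factorial
      ≤ Real.exp X - ∑ k ∈ Finset.range n, X ^ k / k.factorial := by
  have hsx : Summable (fun k : ℕ => x ^ k / (k.factorial : ℝ)) :=
    Real.summable_pow_div_factorial x
  have hsX : Summable (fun k : ℕ => X ^ k / (k.factorial : ℝ)) :=
    Real.summable_pow_div_factorial X
  have hx' := Summable.sum_add_tsum_nat_add n hsx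
  have hX' := Summable.sum_add_tsum_nat_add n hsX
  rw [exp_eq_tsum_real, ← hx', exp_eq_tsum_real X, ← hX']
  have : (∑' k : ℕ, x ^ (k + n) / ((k + n).factorial : ℝ))
      ≤ ∑' k : ℕ, X ^ (k + n) / ((k + n).factorial : ℝ) := by
    refine Summable.tsum_le_tsum (fun k => ?_)
      ((summable_nat_add_iff (f := fun k => x ^ k / (k.factorial : ℝ)) n).mpr hsx)
      ((summable_nat_add_iff (f := fun k => X ^ k / (k.factorial : ℝ)) n).mpr hsX)
    gcongr

  linarith

theorem overapprox_deriv_dominates (ρ μ t₀ : ℝ) (hρ : 0 < ρ) (hμ : 1 < μ) (ht₀ : 0 < t₀) :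
    ∃ n₀ : ℕ, ∀ n ≥ n₀, ∀ t₁ t : ℝ, 0 ≤ t₁ → t₁ ≤ t → t ≤ t₀ →
      ρ * (∑ k ∈ Finset.range (n + 1), (ρ * (μ * t₁)) ^ k / (Nat.factorial k)) *
          Real.exp (ρ * (t - t₁)) ≤
        ρ * μ * ∑ k ∈ Finset.range ((n - 1) + 1), (ρ * (μ * t)) ^ k / (Nat.factorial k) := by
  set X := ρ * (μ * t₀) with hXdef
  have hXpos : 0 < X := by positivity
  have hsX : Summable (fun k : ℕ => X ^ k / (k.factorial : ℝ)) :=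
    Real.summable_pow_div_factorial X
  have htend : Filter.Tendsto (fun m => ∑ k ∈ Finset.range m, X ^ k / (k.factorial : ℝ))
      Filter.atTop (nhds (Real.exp X)) := by
    rw [exp_eq_tsum_real X]; exact hsX.hasSum.tendsto_sum_nat
  have hev : ∀ᶠ m in Filter.atTop,
      Real.exp X - ∑ k ∈ Finset.range m, X ^ k / (k.factorial : ℝ) ≤ μ - 1 := by
    have := htend.const_sub (Real.exp X)
    rw [sub_self] at this
    have h2 := this.eventually (eventually_le_nhds (by linarith : (0:ℝ) < μ - 1))
    exact h2
  obtain ⟨N, hN⟩ := hev.exists_forall_of_atTop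
  refine ⟨max N 1, fun n hn t₁ t ht₁ ht₁t htt₀ => ?_⟩
  have hn1 : 1 ≤ n := le_trans (le_max_right N 1) hn
  have hnN : N ≤ n := le_trans (le_max_left N 1) hn
  have hsub : n - 1 + 1 = n := Nat.succ_pred_eq_of_pos hn1
  rw [hsub]
  have hx0 : (0:ℝ) ≤ ρ * (μ * t₁) := by positivity
  have ht0 : 0 ≤ t := le_trans ht₁ ht₁t
  have hy0 : (0:ℝ) ≤ ρ * (μ * t) := by positivity
  have hyX : ρ * (μ * t) ≤ X := by
    rw [hXdef]; nlinarith
  -- Step 1: partial sum ≤ exp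
  have step1 : ∑ k ∈ Finset.range (n + 1), (ρ * (μ * t₁)) ^ k / (Nat.factorial k : ℝ)
      ≤ Real.exp (ρ * (μ * t₁)) := Real.sum_le_exp_of_nonneg hx0 _
  -- Step 2: exp product ≤ exp (ρμt)
  have step2 : Real.exp (ρ * (μ * t₁)) * Real.exp (ρ * (t - t₁)) ≤ Real.exp (ρ * (μ * t)) := by
    rw [← Real.exp_add]
    apply Real.exp_le_exp.mpr
    nlinarith [mul_nonneg (mul_nonneg hρ.le (by linarith : (0:ℝ) ≤ μ - 1)) (by linarith : (0:ℝ) ≤ t - t₁)]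
  -- Step 3: exp (ρμt) ≤ μ * partial_n
  have hpart1 : (1:ℝ) ≤ ∑ k ∈ Finset.range n, (ρ * (μ * t)) ^ k / (Nat.factorial k : ℝ) := by
    have h0 : (0:ℕ) ∈ Finset.range n := Finset.mem_range.mpr hn1
    calc (1:ℝ) = (ρ * (μ * t)) ^ 0 / (Nat.factorial 0 : ℝ) := by norm_num
    _ ≤ _ := Finset.single_le_sum (f := fun k => (ρ * (μ * t)) ^ k / (Nat.factorial k : ℝ))
        (fun k _ => div_nonneg (pow_nonneg hy0 _) (by positivity)) h0
  have htail : Real.exp (ρ * (μ * t)) - ∑ k ∈ Finset.range n, (ρ * (μ * t)) ^ k / (Nat.factorial k : ℝ)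
      ≤ μ - 1 := le_trans (tail_mono_aux n hy0 hyX) (hN n hnN)
  have step3 : Real.exp (ρ * (μ * t)) ≤ μ * ∑ k ∈ Finset.range n, (ρ * (μ * t)) ^ k / (Nat.factorial k : ℝ) := by
    nlinarith
  -- combine
  have hexpos : (0:ℝ) < Real.exp (ρ * (t - t₁)) := Real.exp_pos _
  have hsum0 : (0:ℝ) ≤ ∑ k ∈ Finset.range (n + 1), (ρ * (μ * t₁)) ^ k / (Nat.factorial k : ℝ) :=
    Finset.sum_nonneg fun k _ => by positivity
  calc ρ * (∑ k ∈ Finset.range (n + 1), (ρ * (μ * t₁)) ^ k / (Nat.factorial k : ℝ)) *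
        Real.exp (ρ * (t - t₁))
      ≤ ρ * Real.exp (ρ * (μ * t₁)) * Real.exp (ρ * (t - t₁)) := by
        apply mul_le_mul_of_nonneg_right _ hexpos.le
        exact mul_le_mul_of_nonneg_left step1 hρ.le
    _ = ρ * (Real.exp (ρ * (μ * t₁)) * Real.exp (ρ * (t - t₁))) := by ring
    _ ≤ ρ * Real.exp (ρ * (μ * t)) := mul_le_mul_of_nonneg_left step2 hρ.le
    _ ≤ ρ * (μ * ∑ k ∈ Finset.range n, (ρ * (μ * t)) ^ k / (Nat.factorial k : ℝ)) :=
        mul_le_mul_of_nonneg_left step3 hρ.le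
    _ = ρ * μ * ∑ k ∈ Finset.range n, (ρ * (μ * t)) ^ k / (Nat.factorial k : ℝ) := by ring
end

section
/- Let ρ₁,…,ρ_k be real numbers, and let 𝕊 = {q ∈ ℝ^k : for all n ∈ ℤ^k, (∑ nᵢρᵢ = 0 → ∑ nᵢqᵢ = 0)}. Let L = {n ∈ ℤ^k : ∑ nᵢρᵢ = 0} and suppose z¹,…,z^m ∈ ℤ^k generate L as a subgroup. Then for s > 1: {(s^{q₁},…,s^{q_k}) : q ∈ 𝕊} = {(w₁,…,w_k) ∈ (0,∞)^k : for all j, ∏ᵢ wᵢ^{zʲᵢ} = 1}. -/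
theorem fat_cone_exponents_semialgebraic (k m : ℕ) (ρ : Fin k → ℝ)
    (z : Fin m → (Fin k → ℤ))
    (hz : ∀ j, (∑ i, (z j i : ℝ) * ρ i) = 0)
    (hgen : ∀ n : Fin k → ℤ, (∑ i, (n i : ℝ) * ρ i) = 0 →
      ∃ c : Fin m → ℤ, n = fun i => ∑ j, c j * z j i)
    (s : ℝ) (hs : 1 < s) :
    {w : Fin k → ℝ | ∃ q : Fin k → ℝ,
        (∀ n : Fin k → ℤ, (∑ i, (n i : ℝ) * ρ i) = 0 → (∑ i, (n i : ℝ) * q i) = 0) ∧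
        w = fun i => s ^ (q i)} =
      {w : Fin k → ℝ | (∀ i, 0 < w i) ∧ ∀ j, (∏ i, (w i) ^ (z j i)) = 1} := by
  have hs0 : (0:ℝ) < s := lt_trans one_pos hs
  have hs1 : s ≠ 1 := ne_of_gt hs
  ext w
  simp only [Set.mem_setOf_eq]
  constructor
  · rintro ⟨q, hq, rfl⟩
    constructor
    · intro i; exact Real.rpow_pos_of_pos hs0 _
    · intro j
      have hqz : (∑ i, (z j i : ℝ) * q i) = 0 := hq (z j) (hz j)
      have : ∀ i : Fin k, (s ^ q i) ^ (z j i) = s ^ ((z j i : ℝ) * q i) := by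
        intro i
        rw [← Real.rpow_intCast (s ^ q i) (z j i), ← Real.rpow_mul (le_of_lt hs0),
          mul_comm]
      rw [Finset.prod_congr rfl (fun i _ => this i), ← Real.rpow_sum_of_pos hs0, hqz,
        Real.rpow_zero]
  · rintro ⟨hpos, hprod⟩
    refine ⟨fun i => Real.logb s (w i), ?_, ?_⟩
    · intro n hn
      obtain ⟨c, hc⟩ := hgen n hn
      have key : ∀ j, (∑ i, (z j i : ℝ) * Real.logb s (w i)) = 0 := by
        intro j
        have : (∑ i, (z j i : ℝ) * Real.logb s (w i))
            = Real.logb s (∏ i, (w i) ^ (z j i)) := by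
          rw [Real.logb, Real.log_prod (fun i _ => by
            exact zpow_ne_zero _ (ne_of_gt (hpos i)))]
          rw [Finset.sum_div]
          refine Finset.sum_congr rfl fun i _ => ?_
          rw [Real.log_zpow, Real.logb, mul_div_assoc]
        rw [this, hprod j, Real.logb_one]
      calc (∑ i, (n i : ℝ) * Real.logb s (w i))
          = ∑ i, (∑ j, (c j : ℝ) * (z j i : ℝ)) * Real.logb s (w i) := by
            refine Finset.sum_congr rfl fun i _ => ?_
            rw [hc]; push_cast; ring_nf
        _ = ∑ j, (c j : ℝ) * (∑ i, (z j i : ℝ) * Real.logb s (w i)) := by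
            simp_rw [Finset.sum_mul]
            rw [Finset.sum_comm]
            simp [Finset.mul_sum, mul_assoc]
        _ = 0 := by simp [key]
    · funext i
      exact (Real.rpow_logb hs0 hs1 (hpos i)).symm
end
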